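/- Let G be a group and H a Hilbert space. The following are equivalent: (0) there exist real numbers κ > 0 and 0 < δ < 1 such that for every 0 < ε < δ and every unitary ε-representation φ: G → U(H), there exists a unitary representation π: G → U(H) such that ‖φ(x) − π(x)‖ ≤ κε for all x ∈ G; (0') there exist real numbers κ₁, κ₂ > 0, 0 < δ < 1, and p > 1 such that for every 0 < ε < 1 with κ₁ ε^{p−1} ≤ δ^{p−1} and every unitary ε-representation φ: G → U(H), there exists a unital positive definite map ψ: G → B(H) satisfying ‖ψ(xy) − ψ(x)ψ(y)‖ ≤ κ₁ ε^{p} for all x, y ∈ G, such that ‖φ(x) − ψ(x)‖ ≤ κ₂ ε for all x ∈ G. -/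

import Mathlib

open scoped ComplexOrder

/-- A map `ψ : G → B(H)` is positive definite. -/
def PosDefMap {G : Type*} [Group G] {H : Type*} [NormedAddCommGroup H]
    [InnerProductSpace ℂ H] (ψ : G → H →L[ℂ] H) : Prop :=
  ∀ (n : ℕ) (x : Fin n → G) (ξ : Fin n → H),
    0 ≤ ∑ i, ∑ j, (inner ℂ (ψ ((x i)⁻¹ * x j) (ξ j)) (ξ i) : ℂ)

section Aux

set_option linter.unusedSectionVars false

variable {H : Type*} [NormedAddCommGroup H] [InnerProductSpace ℂ H] [CompleteSpace H]

lemma spec_bound [Nontrivial H] {a : H →L[ℂ] H} {t : ℝ} (h : ‖a - 1‖ ≤ t) :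
    ∀ s ∈ spectrum ℝ a, |s - 1| ≤ t := by
  intro s hs
  have h1 : s - 1 ∈ spectrum ℝ (a - (algebraMap ℝ (H →L[ℂ] H)) 1) := by
    rw [← spectrum.sub_singleton_eq]
    exact Set.sub_mem_sub hs rfl
  have h2 := spectrum.norm_le_norm_of_mem h1
  rw [map_one] at h2
  simpa using h2.trans h

lemma ptwise {s t : ℝ} (hs : 1/2 ≤ s) (hst : |s - 1| ≤ t) :
    |1 - (Real.sqrt s)⁻¹| ≤ 2 * t := by
  set r := Real.sqrt s with hr_def
  have hs0 : (0:ℝ) ≤ s := by linarith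
  have hr2 : r * r = s := Real.mul_self_sqrt hs0
  have hr0 : 0 < r := Real.sqrt_pos.mpr (by linarith)
  have hrhalf : 1/2 ≤ r := by nlinarith
  have habs := abs_le.mp hst
  have key : |r - 1| ≤ 2 * t * r := by
    rw [abs_le]
    constructor <;> nlinarith [habs.1, habs.2]
  have h1 : 1 - r⁻¹ = (r - 1) / r := by field_simp
  rw [h1, abs_div, abs_of_pos hr0, div_le_iff₀ hr0]
  calc |r - 1| ≤ 2 * t * r := key
    _ = 2 * t * r := rfl

lemma cfc_inv_sqrt_facts {c : H →L[ℂ] H} (hc : IsSelfAdjoint c)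
    (hspec : ∀ s ∈ spectrum ℝ c, 1/2 ≤ s ∧ s ≤ 3/2) :
    IsSelfAdjoint (cfc (fun s : ℝ => (Real.sqrt s)⁻¹) c) ∧
    (cfc (fun s : ℝ => (Real.sqrt s)⁻¹) c) * (c * cfc (fun s : ℝ => (Real.sqrt s)⁻¹) c) = 1 ∧
    ((cfc (fun s : ℝ => (Real.sqrt s)⁻¹) c) * (cfc (fun s : ℝ => (Real.sqrt s)⁻¹) c)) * c = 1 ∧
    c * ((cfc (fun s : ℝ => (Real.sqrt s)⁻¹) c) * (cfc (fun s : ℝ => (Real.sqrt s)⁻¹) c)) = 1 := by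
  set f : ℝ → ℝ := fun s => (Real.sqrt s)⁻¹ with hf_def
  have hf : ContinuousOn f (spectrum ℝ c) := by
    apply ContinuousOn.inv₀ (Real.continuous_sqrt.continuousOn)
    intro s hs
    have := (hspec s hs).1
    exact ne_of_gt (Real.sqrt_pos.mpr (by linarith))
  have hid : ContinuousOn (fun s : ℝ => s) (spectrum ℝ c) := continuousOn_id
  have hmain : ∀ s ∈ spectrum ℝ c, f s * (s * f s) = 1 := by
    intro s hs
    have h1 := (hspec s hs).1
    have hs0 : (0:ℝ) ≤ s := by linarith
    have hr2 : Real.sqrt s * Real.sqrt s = s := Real.mul_self_sqrt hs0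
    have hr0 : Real.sqrt s ≠ 0 := ne_of_gt (Real.sqrt_pos.mpr (by linarith))
    show (Real.sqrt s)⁻¹ * (s * (Real.sqrt s)⁻¹) = 1
    have e : (Real.sqrt s)⁻¹ * (s * (Real.sqrt s)⁻¹) = s / (Real.sqrt s * Real.sqrt s) := by ring
    rw [e, hr2, div_self (ne_of_gt (by linarith))]
  have e1 : cfc (fun s : ℝ => f s * (s * f s)) c = cfc f c * (c * cfc f c) := by
    rw [cfc_mul f (fun s : ℝ => s * f s) c hf (hid.mul hf),
      cfc_mul (fun s : ℝ => s) f c hid hf, cfc_id' ℝ c]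
  have e2 : cfc (fun s : ℝ => f s * f s * s) c = (cfc f c * cfc f c) * c := by
    rw [cfc_mul (fun s : ℝ => f s * f s) (fun s : ℝ => s) c (hf.mul hf) hid,
      cfc_mul f f c hf hf, cfc_id' ℝ c]
  have e3 : cfc (fun s : ℝ => s * (f s * f s)) c = c * (cfc f c * cfc f c) := by
    rw [cfc_mul (fun s : ℝ => s) (fun s : ℝ => f s * f s) c hid (hf.mul hf),
      cfc_mul f f c hf hf, cfc_id' ℝ c]
  refine ⟨cfc_predicate f c, ?_, ?_, ?_⟩
  · rw [← e1, ← cfc_one ℝ c]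
    exact cfc_congr fun s hs => hmain s hs
  · rw [← e2, ← cfc_one ℝ c]
    refine cfc_congr fun s hs => ?_
    have := hmain s hs
    simp only [Pi.one_apply]
    nlinarith [this]
  · rw [← e3, ← cfc_one ℝ c]
    refine cfc_congr fun s hs => ?_
    have := hmain s hs
    simp only [Pi.one_apply]
    nlinarith [this]

lemma almost_unitary [Nontrivial H] {T : H →L[ℂ] H} {t : ℝ} (ht : t ≤ 1/2)
    (h1 : ‖star T * T - 1‖ ≤ t) (h2 : ‖T * star T - 1‖ ≤ t) :
    ∃ u ∈ unitary (H →L[ℂ] H), ‖T - u‖ ≤ 4 * t := by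
  have ht0 : 0 ≤ t := le_trans (norm_nonneg _) h1
  have ha : IsSelfAdjoint (star T * T) := IsSelfAdjoint.star_mul_self T
  have hb : IsSelfAdjoint (T * star T) := IsSelfAdjoint.mul_star_self T
  have hsa : ∀ s ∈ spectrum ℝ (star T * T), 1/2 ≤ s ∧ s ≤ 3/2 := by
    intro s hs
    have h := abs_le.mp (spec_bound h1 s hs)
    constructor <;> linarith [h.1, h.2]
  have hsb : ∀ s ∈ spectrum ℝ (T * star T), 1/2 ≤ s ∧ s ≤ 3/2 := by
    intro s hs
    have h := abs_le.mp (spec_bound h2 s hs)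
    constructor <;> linarith [h.1, h.2]
  obtain ⟨hvsa, hv1, hv2, hv3⟩ := cfc_inv_sqrt_facts ha hsa
  obtain ⟨hwsa, hw1, hw2, hw3⟩ := cfc_inv_sqrt_facts hb hsb
  set f : ℝ → ℝ := fun s => (Real.sqrt s)⁻¹ with hf_def
  set v := cfc f (star T * T) with hv_def
  set w := cfc f (T * star T) with hw_def
  have hlinv : ((v * v) * star T) * T = 1 := by rw [mul_assoc]; exact hv2
  have hrinv : T * (star T * (w * w)) = 1 := by rw [← mul_assoc]; exact hw3
  have hlr : (v * v) * star T = star T * (w * w) := by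
    calc (v * v) * star T = ((v * v) * star T) * (T * (star T * (w * w))) := by
          rw [hrinv, mul_one]
      _ = (((v * v) * star T) * T) * (star T * (w * w)) := by rw [← mul_assoc]
      _ = star T * (w * w) := by rw [hlinv, one_mul]
  have hT : IsUnit T := ⟨⟨T, star T * (w * w), hrinv, by rw [← hlr]; exact hlinv⟩, rfl⟩
  have hV : IsUnit v := by
    refine ⟨⟨v, (star T * T) * v, hv1, ?_⟩, rfl⟩
    rw [mul_assoc]
    exact hv3
  set u := T * v with hu_def
  have hstaru : star u * u = 1 := by
    calc star u * u = v * (star T * T * v) := by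
          rw [hu_def, star_mul, hvsa.star_eq, mul_assoc, ← mul_assoc (star T) T v]
      _ = 1 := hv1
  have hU : IsUnit u := hT.mul hV
  obtain ⟨U, hUeq⟩ := hU
  have hustar : u * star u = 1 := by
    have hinv : star u = ↑U⁻¹ :=
      (Units.inv_eq_of_mul_eq_one_left (by rw [hUeq]; exact hstaru)).symm
    rw [hinv, ← hUeq, Units.mul_inv]
  refine ⟨u, Unitary.mem_iff.mpr ⟨hstaru, hustar⟩, ?_⟩
  have hnormT : ‖T‖ ≤ 2 := by
    have hTT : ‖star T * T‖ = ‖T‖ * ‖T‖ := CStarRing.norm_star_mul_self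
    have hb1 : ‖star T * T‖ ≤ t + 1 := by
      calc ‖star T * T‖ ≤ ‖star T * T - 1‖ + ‖(1 : H →L[ℂ] H)‖ := by
            simpa using norm_add_le (star T * T - 1) 1
        _ ≤ t + 1 := by rw [norm_one]; linarith
    have hb2 : ‖T‖ * ‖T‖ ≤ 3/2 := by rw [← hTT]; linarith
    nlinarith [norm_nonneg T]
  have hv_norm : ‖1 - v‖ ≤ 2 * t := by
    have hsub : (1 : H →L[ℂ] H) - v = cfc (fun s : ℝ => 1 - f s) (star T * T) := by
      rw [cfc_sub _ _ _ (continuousOn_const) (by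
        apply ContinuousOn.inv₀ (Real.continuous_sqrt.continuousOn)
        intro s hs
        exact ne_of_gt (Real.sqrt_pos.mpr (by linarith [(hsa s hs).1]))),
        cfc_const_one ℝ (star T * T)]
    rw [hsub]
    refine norm_cfc_le (by linarith) fun s hs => ?_
    have := ptwise (hsa s hs).1 (spec_bound h1 s hs)
    simpa using this
  calc ‖T - u‖ = ‖T * (1 - v)‖ := by rw [mul_sub, mul_one]
    _ ≤ ‖T‖ * ‖1 - v‖ := norm_mul_le _ _
    _ ≤ 2 * (2 * t) := mul_le_mul hnormT hv_norm (norm_nonneg _) (by norm_num)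
    _ = 4 * t := by ring

lemma posdef_star {G : Type*} [Group G] (ψ : G → H →L[ℂ] H) (h : PosDefMap ψ)
    (h1 : ψ 1 = 1) (g : G) : ψ g⁻¹ = star (ψ g) := by
  have him : ∀ ξ η : H, ((inner ℂ (ψ g η) ξ : ℂ) + (inner ℂ (ψ g⁻¹ ξ) η : ℂ)).im = 0 := by
    intro ξ η
    have h2 := h 2 ![1, g] ![ξ, η]
    simp only [Fin.sum_univ_two, Matrix.cons_val_zero, Matrix.cons_val_one, Matrix.head_cons,
      inv_one, one_mul, mul_one, inv_mul_cancel, h1, ContinuousLinearMap.one_apply] at h2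
    have him0 := (Complex.le_def.mp h2).2
    simp only [Complex.zero_im, Complex.add_im] at him0
    have i1 : (inner ℂ (ξ : H) ξ : ℂ).im = 0 := inner_self_im (𝕜 := ℂ) _
    have i2 : (inner ℂ (η : H) η : ℂ).im = 0 := inner_self_im (𝕜 := ℂ) _
    rw [Complex.add_im]
    linarith [him0, i1, i2]
  have hconj : ∀ ξ η : H, (inner ℂ (ψ g⁻¹ ξ) η : ℂ) = starRingEnd ℂ (inner ℂ (ψ g η) ξ : ℂ) := by
    intro ξ η
    have e1 := him ξ η
    have e2 := him ξ (Complex.I • η)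
    rw [map_smul, inner_smul_left, inner_smul_right] at e2
    set a : ℂ := inner ℂ (ψ g η) ξ
    set b : ℂ := inner ℂ (ψ g⁻¹ ξ) η
    rw [Complex.add_im] at e1
    have e2' : -a.re + b.re = 0 := by
      simpa [Complex.add_im, Complex.mul_im, Complex.conj_re, Complex.conj_im] using e2
    apply Complex.ext
    · simp [Complex.conj_re]; linarith
    · simp [Complex.conj_im]; linarith
  ext ξ
  refine ext_inner_right ℂ fun η => ?_
  rw [hconj ξ η, inner_conj_symm, ContinuousLinearMap.star_eq_adjoint,
    ContinuousLinearMap.adjoint_inner_left]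

end Aux

set_option maxHeartbeats 1000000 in
/-- Proposition 1.2 of \cite{stable}. For a group `G` and a Hilbert
space `H`, the linear Ulam stability condition (0) for unitary representations is
equivalent to the Ulam stability condition (0') for sufficiently multiplicative unital
positive definite maps. -/
theorem stmt_13 (G : Type*) [Group G]
    (H : Type*) [NormedAddCommGroup H] [InnerProductSpace ℂ H] [CompleteSpace H] :
    (∃ κ δ : ℝ, 0 < κ ∧ 0 < δ ∧ δ < 1 ∧
      ∀ ε : ℝ, 0 < ε → ε < δ →
        ∀ φ : G → H →L[ℂ] H, (∀ x, φ x ∈ unitary (H →L[ℂ] H)) →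
          (∀ x y, ‖φ (x * y) - φ x * φ y‖ ≤ ε) →
          ∃ π : G →* unitary (H →L[ℂ] H), ∀ x, ‖φ x - (π x : H →L[ℂ] H)‖ ≤ κ * ε) ↔
    (∃ κ₁ κ₂ δ p : ℝ, 0 < κ₁ ∧ 0 < κ₂ ∧ 0 < δ ∧ δ < 1 ∧ 1 < p ∧
      ∀ ε : ℝ, 0 < ε → ε < 1 → κ₁ * ε ^ (p - 1) ≤ δ ^ (p - 1) →
        ∀ φ : G → H →L[ℂ] H, (∀ x, φ x ∈ unitary (H →L[ℂ] H)) →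
          (∀ x y, ‖φ (x * y) - φ x * φ y‖ ≤ ε) →
          ∃ ψ : G → H →L[ℂ] H, PosDefMap ψ ∧ ψ 1 = 1 ∧
            (∀ x y, ‖ψ (x * y) - ψ x * ψ y‖ ≤ κ₁ * ε ^ p) ∧
            ∀ x, ‖φ x - ψ x‖ ≤ κ₂ * ε) := by
  rcases subsingleton_or_nontrivial H with hsub | hnt
  · -- trivial Hilbert space: both sides hold
    have hS : Subsingleton (H →L[ℂ] H) := ⟨fun f g => by ext x; exact Subsingleton.elim _ _⟩
    have hz : ∀ a : H →L[ℂ] H, ‖a‖ = 0 := fun a => by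
      rw [Subsingleton.elim a 0, norm_zero]
    apply iff_of_true
    · refine ⟨1, 1/2, one_pos, by norm_num, by norm_num, fun ε hε _ φ _ _ => ⟨1, fun x => ?_⟩⟩
      rw [hz]
      positivity
    · refine ⟨1, 1, 1/2, 2, one_pos, one_pos, by norm_num, by norm_num, by norm_num,
        fun ε hε _ _ φ _ _ => ⟨fun _ => 1, ?_, rfl, fun x y => ?_, fun x => ?_⟩⟩
      · intro n x ξ
        have hinner : ∀ (v w : H), (inner ℂ v w : ℂ) = 0 := fun v w => by
          rw [Subsingleton.elim v 0, inner_zero_left]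
        simp [hinner]
      · rw [hz]
        have : (0:ℝ) < ε ^ (2:ℝ) := Real.rpow_pos_of_pos hε 2
        linarith
      · rw [hz]
        positivity
  constructor
  · -- (0) → (0')
    rintro ⟨κ, δ, hκ, hδ, hδ1, h0⟩
    refine ⟨1, κ, δ/2, 2, one_pos, hκ, by linarith, by linarith, one_lt_two,
      fun ε hε hε1 hεδ φ hφu hφm => ?_⟩
    have hεδ' : ε < δ := by
      have h2 : (2:ℝ) - 1 = 1 := by norm_num
      rw [h2, Real.rpow_one, Real.rpow_one, one_mul] at hεδ
      linarith
    obtain ⟨π, hπ⟩ := h0 ε hε hεδ' φ hφu hφm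
    refine ⟨fun x => (π x : H →L[ℂ] H), ?_, ?_, ?_, hπ⟩
    · intro n x ξ
      have hterm : ∀ i j : Fin n,
          (inner ℂ (((π ((x i)⁻¹ * x j) : unitary (H →L[ℂ] H)) : H →L[ℂ] H) (ξ j)) (ξ i) : ℂ)
            = inner ℂ (((π (x j) : unitary (H →L[ℂ] H)) : H →L[ℂ] H) (ξ j))
                (((π (x i) : unitary (H →L[ℂ] H)) : H →L[ℂ] H) (ξ i)) := by
        intro i j
        have e : (π ((x i)⁻¹ * x j) : H →L[ℂ] H)
            = star (π (x i) : H →L[ℂ] H) * (π (x j) : H →L[ℂ] H) := by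
          rw [map_mul, map_inv, ← Unitary.star_eq_inv]
          rfl
        rw [e]
        rw [ContinuousLinearMap.mul_apply, ContinuousLinearMap.star_eq_adjoint,
          ContinuousLinearMap.adjoint_inner_left]
      calc (0:ℂ) ≤ (inner ℂ (∑ i, ((π (x i) : unitary (H →L[ℂ] H)) : H →L[ℂ] H) (ξ i))
              (∑ i, ((π (x i) : unitary (H →L[ℂ] H)) : H →L[ℂ] H) (ξ i)) : ℂ) := by
            rw [Complex.le_def]
            constructor
            · rw [Complex.zero_re]
              exact inner_self_nonneg (𝕜 := ℂ)
            · rw [Complex.zero_im]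
              exact (inner_self_im (𝕜 := ℂ) _).symm
        _ = ∑ i, ∑ j, (inner ℂ (((π ((x i)⁻¹ * x j) : unitary (H →L[ℂ] H)) : H →L[ℂ] H) (ξ j))
              (ξ i) : ℂ) := by
            rw [sum_inner]
            rw [Finset.sum_congr rfl fun i (_ : i ∈ Finset.univ) => inner_sum _ _ _]
            rw [Finset.sum_comm]
            exact Finset.sum_congr rfl fun i _ => Finset.sum_congr rfl fun j _ =>
              (hterm i j).symm
    · show ((π 1 : unitary (H →L[ℂ] H)) : H →L[ℂ] H) = 1
      rw [map_one]
      rfl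
    · intro x y
      show ‖((π (x*y) : unitary (H →L[ℂ] H)) : H →L[ℂ] H)
        - (π x : H →L[ℂ] H) * (π y : H →L[ℂ] H)‖ ≤ 1 * ε ^ (2:ℝ)
      rw [map_mul]
      have : ((π x * π y : unitary (H →L[ℂ] H)) : H →L[ℂ] H)
          = (π x : H →L[ℂ] H) * (π y : H →L[ℂ] H) := rfl
      rw [this, sub_self, norm_zero]
      have : (0:ℝ) < ε ^ (2:ℝ) := Real.rpow_pos_of_pos hε 2
      linarith
  · -- (0') → (0)
    rintro ⟨κ₁, κ₂, δ, p, hκ₁, hκ₂, hδ, hδ1, hp, P⟩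
    set q := p - 1 with hq_def
    have hq : 0 < q := by simp [hq_def]; linarith
    set K := κ₁ * (13 + 4 * κ₂) with hK_def
    have hK : 0 < K := by positivity
    set C := κ₂ + 4 * κ₁ with hC_def
    have hC : 0 < C := by positivity
    set δ₀ := min (1/2) (min ((δ^q/κ₁) ^ q⁻¹) ((1/(2*K)) ^ q⁻¹)) with hδ₀_def
    have hδ₀pos : 0 < δ₀ := by
      refine lt_min (by norm_num) (lt_min ?_ ?_)
      · exact Real.rpow_pos_of_pos (by positivity) _
      · exact Real.rpow_pos_of_pos (by positivity) _
    have hδ₀half : δ₀ ≤ 1/2 := min_le_left _ _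
    have small : ∀ ε : ℝ, 0 < ε → ε ≤ δ₀ → κ₁ * ε ^ q ≤ δ ^ q ∧ K * ε ^ q ≤ 1/2 := by
      intro ε hε hεδ₀
      have hε0 : (0:ℝ) ≤ ε := hε.le
      have b1 : ε ≤ (δ^q/κ₁) ^ q⁻¹ := hεδ₀.trans ((min_le_right _ _).trans (min_le_left _ _))
      have b2 : ε ≤ (1/(2*K)) ^ q⁻¹ := hεδ₀.trans ((min_le_right _ _).trans (min_le_right _ _))
      constructor
      · have h1 : ε ^ q ≤ ((δ^q/κ₁) ^ q⁻¹) ^ q := Real.rpow_le_rpow hε0 b1 hq.le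
        rw [← Real.rpow_mul (by positivity), inv_mul_cancel₀ hq.ne', Real.rpow_one] at h1
        calc κ₁ * ε ^ q ≤ κ₁ * (δ^q/κ₁) := mul_le_mul_of_nonneg_left h1 hκ₁.le
          _ = δ ^ q := by field_simp
      · have h1 : ε ^ q ≤ ((1/(2*K)) ^ q⁻¹) ^ q := Real.rpow_le_rpow hε0 b2 hq.le
        rw [← Real.rpow_mul (by positivity), inv_mul_cancel₀ hq.ne', Real.rpow_one] at h1
        calc K * ε ^ q ≤ K * (1/(2*K)) := mul_le_mul_of_nonneg_left h1 hK.le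
          _ = 1/2 := by field_simp
    -- the single improvement step
    have step : ∀ (ε : ℝ) (φ : G → H →L[ℂ] H), 0 < ε → ε ≤ δ₀ →
        (∀ x, φ x ∈ unitary (H →L[ℂ] H)) →
        (∀ x y, ‖φ (x * y) - φ x * φ y‖ ≤ ε) →
        ∃ φ' : G → H →L[ℂ] H, (∀ x, φ' x ∈ unitary (H →L[ℂ] H)) ∧
          (∀ x y, ‖φ' (x * y) - φ' x * φ' y‖ ≤ ε/2) ∧ ∀ x, ‖φ x - φ' x‖ ≤ C * ε := by
      intro ε φ hε hεδ₀ hφu hφm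
      have hε1 : ε < 1 := by
        have := hεδ₀.trans hδ₀half
        linarith
      obtain ⟨hs1, hs2⟩ := small ε hε hεδ₀
      have hεp : ε ^ p = ε ^ q * ε := by
        have hqe : ε ^ q = ε ^ p / ε := by rw [hq_def, Real.rpow_sub hε, Real.rpow_one]
        rw [hqe]
        field_simp
      have hεq1 : ε ^ q ≤ 1 := Real.rpow_le_one hε.le hε1.le hq.le
      have hεqpos : 0 < ε ^ q := Real.rpow_pos_of_pos hε q
      obtain ⟨ψ, hψpd, hψ1, hψm, hψd⟩ := P ε hε hε1 hs1 φ hφu hφm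
      set τ := κ₁ * ε ^ p with hτ_def
      have hτpos : 0 < τ := by positivity
      have hτle : τ ≤ ε/2 := by
        have hκ₁K : κ₁ ≤ K := by nlinarith
        have : κ₁ * ε ^ q ≤ 1/2 := le_trans (by nlinarith) hs2
        rw [hτ_def, hεp, ← mul_assoc]
        nlinarith
      have hτhalf : τ ≤ 1/2 := by
        have : ε ≤ 1/2 := hεδ₀.trans hδ₀half
        linarith
      have hstar : ∀ x, star (ψ x) = ψ x⁻¹ := fun x => (posdef_star ψ hψpd hψ1 x).symm
      have hT1 : ∀ x, ‖star (ψ x) * ψ x - 1‖ ≤ τ := by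
        intro x
        rw [hstar x]
        have h := hψm x⁻¹ x
        rw [inv_mul_cancel, hψ1] at h
        rw [← norm_sub_rev] at h
        exact h
      have hT2 : ∀ x, ‖ψ x * star (ψ x) - 1‖ ≤ τ := by
        intro x
        rw [hstar x]
        have h := hψm x x⁻¹
        rw [mul_inv_cancel, hψ1] at h
        rw [← norm_sub_rev] at h
        exact h
      choose u hu hud using fun x =>
        almost_unitary (t := τ) (by linarith) (hT1 x) (hT2 x)
      have hψnorm : ∀ y, ‖ψ y‖ ≤ 1 + κ₂ := by
        intro y
        have h1 : ‖φ y‖ = 1 := CStarRing.norm_of_mem_unitary (hφu y)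
        have h2 : ‖ψ y‖ - ‖φ y‖ ≤ ‖ψ y - φ y‖ := norm_sub_norm_le _ _
        rw [norm_sub_rev] at h2
        have h3 := hψd y
        have h4 : κ₂ * ε ≤ κ₂ := by nlinarith
        linarith
      refine ⟨u, hu, ?_, ?_⟩
      · intro x y
        have hn1 : ‖u x‖ = 1 := CStarRing.norm_of_mem_unitary (hu x)
        have t1 : u (x*y) - u x * u y = (u (x*y) - ψ (x*y)) + ((ψ (x*y) - ψ x * ψ y)
            + ((ψ x * ψ y - u x * ψ y) + (u x * ψ y - u x * u y))) := by abel
        have b1 : ‖u (x*y) - ψ (x*y)‖ ≤ 4 * τ := by rw [norm_sub_rev]; exact hud (x*y)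
        have b2 : ‖ψ (x*y) - ψ x * ψ y‖ ≤ τ := hψm x y
        have b3 : ‖ψ x * ψ y - u x * ψ y‖ ≤ 4 * τ * (1 + κ₂) := by
          rw [← sub_mul]
          calc ‖(ψ x - u x) * ψ y‖ ≤ ‖ψ x - u x‖ * ‖ψ y‖ := norm_mul_le _ _
            _ ≤ (4 * τ) * (1 + κ₂) := by
                apply mul_le_mul (hud x) (hψnorm y) (norm_nonneg _) (by linarith)
        have b4 : ‖u x * ψ y - u x * u y‖ ≤ 4 * τ := by
          rw [← mul_sub]
          calc ‖u x * (ψ y - u y)‖ ≤ ‖u x‖ * ‖ψ y - u y‖ := norm_mul_le _ _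
            _ ≤ 1 * (4 * τ) := by rw [hn1]; simpa using hud y
            _ = 4 * τ := by ring
        have total : ‖u (x*y) - u x * u y‖ ≤ (13 + 4 * κ₂) * τ := by
          rw [t1]
          calc ‖_ + _‖ ≤ ‖u (x*y) - ψ (x*y)‖ + ‖(ψ (x*y) - ψ x * ψ y)
                + ((ψ x * ψ y - u x * ψ y) + (u x * ψ y - u x * u y))‖ := norm_add_le _ _
            _ ≤ ‖u (x*y) - ψ (x*y)‖ + (‖ψ (x*y) - ψ x * ψ y‖
                + ‖(ψ x * ψ y - u x * ψ y) + (u x * ψ y - u x * u y)‖) := by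
                have := norm_add_le (ψ (x*y) - ψ x * ψ y)
                  ((ψ x * ψ y - u x * ψ y) + (u x * ψ y - u x * u y))
                linarith
            _ ≤ ‖u (x*y) - ψ (x*y)‖ + (‖ψ (x*y) - ψ x * ψ y‖
                + (‖ψ x * ψ y - u x * ψ y‖ + ‖u x * ψ y - u x * u y‖)) := by
                have := norm_add_le (ψ x * ψ y - u x * ψ y) (u x * ψ y - u x * u y)
                linarith
            _ ≤ (13 + 4 * κ₂) * τ := by nlinarith
        calc ‖u (x*y) - u x * u y‖ ≤ (13 + 4 * κ₂) * τ := total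
          _ = K * ε ^ p := by rw [hτ_def, hK_def]; ring
          _ = (K * ε ^ q) * ε := by rw [hεp]; ring
          _ ≤ (1/2) * ε := by nlinarith
          _ = ε / 2 := by ring
      · intro x
        have b1 := hψd x
        have b2 := hud x
        have hεple : ε ^ p ≤ ε := by
          rw [hεp]
          nlinarith
        calc ‖φ x - u x‖ ≤ ‖φ x - ψ x‖ + ‖ψ x - u x‖ := by
              have t : φ x - u x = (φ x - ψ x) + (ψ x - u x) := by abel
              rw [t]; exact norm_add_le _ _
          _ ≤ κ₂ * ε + 4 * τ := by linarith
          _ ≤ κ₂ * ε + 4 * (κ₁ * ε) := by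
              have : τ ≤ κ₁ * ε := by rw [hτ_def]; nlinarith
              linarith
          _ = C * ε := by rw [hC_def]; ring
    -- iterate
    refine ⟨2*C + 1, δ₀, by positivity, hδ₀pos, by linarith, ?_⟩
    intro ε hε hεδ₀ φ hφu hφm
    have step' : ∀ (n : ℕ) (φ' : G → H →L[ℂ] H), (∀ x, φ' x ∈ unitary (H →L[ℂ] H)) →
        (∀ x y, ‖φ' (x * y) - φ' x * φ' y‖ ≤ ε / 2^n) →
        ∃ φ'' : G → H →L[ℂ] H, (∀ x, φ'' x ∈ unitary (H →L[ℂ] H)) ∧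
          (∀ x y, ‖φ'' (x * y) - φ'' x * φ'' y‖ ≤ ε / 2^(n+1)) ∧
          ∀ x, ‖φ' x - φ'' x‖ ≤ C * (ε / 2^n) := by
      intro n φ' h1 h2
      have hpos : 0 < ε / 2^n := by positivity
      have hle : ε / 2^n ≤ δ₀ := by
        have h2n : (1:ℝ) ≤ 2 ^ n := one_le_pow₀ (by norm_num)
        have : ε / 2^n ≤ ε := div_le_self hε.le h2n
        linarith
      obtain ⟨φ'', a, b, c⟩ := step (ε / 2^n) φ' hpos hle h1 h2
      have hdiv : ε / 2^n / 2 = ε / 2^(n+1) := by rw [pow_succ]; ring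
      exact ⟨φ'', a, by rw [← hdiv]; exact b, c⟩
    choose F hF1 hF2 hF3 using step'
    let seq : ∀ n : ℕ, {g : G → H →L[ℂ] H // (∀ x, g x ∈ unitary (H →L[ℂ] H)) ∧
        ∀ x y, ‖g (x * y) - g x * g y‖ ≤ ε / 2^n} := fun n =>
      Nat.rec ⟨φ, hφu, fun x y => by simpa using hφm x y⟩
        (fun k ih => ⟨F k ih.1 ih.2.1 ih.2.2, hF1 k ih.1 ih.2.1 ih.2.2,
          hF2 k ih.1 ih.2.1 ih.2.2⟩) n
    have hseq0 : (seq 0).1 = φ := rfl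
    have hseq_succ : ∀ n, (seq (n+1)).1 = F n (seq n).1 (seq n).2.1 (seq n).2.2 :=
      fun n => rfl
    have hdist : ∀ n x, ‖(seq n).1 x - (seq (n+1)).1 x‖ ≤ C * (ε / 2^n) := by
      intro n x
      rw [hseq_succ n]
      exact hF3 n (seq n).1 (seq n).2.1 (seq n).2.2 x
    have hlim : ∀ x : G, ∃ L : H →L[ℂ] H,
        Filter.Tendsto (fun n => (seq n).1 x) Filter.atTop (nhds L) := by
      intro x
      have hcs : CauchySeq (fun n => (seq n).1 x) := by
        apply cauchySeq_of_le_geometric (1/2) (C * ε) (by norm_num)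
        intro n
        rw [dist_eq_norm]
        calc ‖(seq n).1 x - (seq (n+1)).1 x‖ ≤ C * (ε / 2^n) := hdist n x
          _ = C * ε * (1/2)^n := by
              rw [div_pow, one_pow]
              ring
      exact cauchySeq_tendsto_of_complete hcs
    choose L hL using hlim
    have hLunit : ∀ x, L x ∈ unitary (H →L[ℂ] H) := by
      intro x
      rw [Unitary.mem_iff]
      constructor
      · have h1 : Filter.Tendsto (fun n => star ((seq n).1 x) * (seq n).1 x) Filter.atTop
            (nhds (star (L x) * L x)) := ((hL x).star).mul (hL x)
        have h2 : (fun n => star ((seq n).1 x) * (seq n).1 x) = fun _ => 1 :=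
          funext fun n => (Unitary.mem_iff.mp ((seq n).2.1 x)).1
        rw [h2] at h1
        exact tendsto_nhds_unique h1 tendsto_const_nhds
      · have h1 : Filter.Tendsto (fun n => (seq n).1 x * star ((seq n).1 x)) Filter.atTop
            (nhds (L x * star (L x))) := (hL x).mul ((hL x).star)
        have h2 : (fun n => (seq n).1 x * star ((seq n).1 x)) = fun _ => 1 :=
          funext fun n => (Unitary.mem_iff.mp ((seq n).2.1 x)).2
        rw [h2] at h1
        exact tendsto_nhds_unique h1 tendsto_const_nhds
    have hLmul : ∀ x y, L (x * y) = L x * L y := by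
      intro x y
      have h1 : Filter.Tendsto (fun n => (seq n).1 (x*y) - (seq n).1 x * (seq n).1 y)
          Filter.atTop (nhds (L (x*y) - L x * L y)) := (hL (x*y)).sub ((hL x).mul (hL y))
      have h2 : Filter.Tendsto (fun n => (seq n).1 (x*y) - (seq n).1 x * (seq n).1 y)
          Filter.atTop (nhds 0) := by
        apply squeeze_zero_norm (fun n => (seq n).2.2 x y)
        have hg : Filter.Tendsto (fun n : ℕ => ε * (1/2)^n) Filter.atTop (nhds (ε * 0)) :=
          (tendsto_pow_atTop_nhds_zero_of_lt_one (by norm_num) (by norm_num)).const_mul ε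
        have he : (fun n : ℕ => ε / 2^n) = fun n : ℕ => ε * (1/2)^n := by
          funext n
          rw [div_pow, one_pow]
          ring
        rw [he]
        simpa using hg
      have := tendsto_nhds_unique h1 h2
      exact sub_eq_zero.mp this
    refine ⟨MonoidHom.mk' (fun x => ⟨L x, hLunit x⟩) (fun x y => Subtype.ext (hLmul x y)), ?_⟩
    intro x
    have hbound : ∀ n, ‖φ x - (seq n).1 x‖ ≤ (2 - 2*(1/2)^n) * (C * ε) := by
      intro n
      induction n with
      | zero => simp [hseq0]
      | succ n ih =>
        have tri : ‖φ x - (seq (n+1)).1 x‖ ≤ ‖φ x - (seq n).1 x‖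
            + ‖(seq n).1 x - (seq (n+1)).1 x‖ := by
          have t : φ x - (seq (n+1)).1 x
              = (φ x - (seq n).1 x) + ((seq n).1 x - (seq (n+1)).1 x) := by abel
          rw [t]; exact norm_add_le _ _
        have heq : C * (ε / 2^n) = (C * ε) * (1/2)^n := by
          rw [div_pow, one_pow]; ring
        have hid : (2 - 2*(1/2)^n) * (C * ε) + (C * ε) * (1/2)^n
            = (2 - 2*(1/2)^(n+1)) * (C * ε) := by
          rw [pow_succ]; ring
        calc ‖φ x - (seq (n+1)).1 x‖
            ≤ (2 - 2*(1/2)^n) * (C * ε) + C * (ε / 2^n) := by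
              linarith [hdist n x]
          _ = (2 - 2*(1/2)^(n+1)) * (C * ε) := by rw [heq, hid]
    have hfin : ∀ n, ‖φ x - (seq n).1 x‖ ≤ 2 * (C * ε) := by
      intro n
      refine (hbound n).trans ?_
      have hpn : (0:ℝ) ≤ (1/2:ℝ)^n := by positivity
      nlinarith [mul_nonneg hpn (mul_pos hC hε).le]
    have h1 : Filter.Tendsto (fun n => ‖φ x - (seq n).1 x‖) Filter.atTop
        (nhds ‖φ x - L x‖) := (tendsto_const_nhds.sub (hL x)).norm
    have h2 : ‖φ x - L x‖ ≤ 2 * (C * ε) := le_of_tendsto h1 (.of_forall hfin)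
    calc ‖φ x - L x‖ ≤ 2 * (C * ε) := h2
      _ ≤ (2*C + 1) * ε := by nlinarith
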